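/- For integers n, m ≥ 3, the set {(i,1) : i ∈ [n]} ∪ {(1,j) : j ∈ [m]} is a dual mutual-visibility set of K_n □ K_m of cardinality n + m − 1. -/

import Mathlib

namespace MutualVisibility

open SimpleGraph

variable {V W : Type*}

/-- `x` and `y` are `X`-visible in `G`: there is a shortest `x,y`-path all of whose
internal vertices avoid `X`. -/
def Visible (G : SimpleGraph V) (X : Set V) (x y : V) : Prop :=
  ∃ p : G.Walk x y, p.length = G.dist x y ∧ ∀ v ∈ p.support, v ≠ x → v ≠ y → v ∉ X

/-- `X` is a mutual-visibility set: any two vertices of `X` are `X`-visible. -/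
def IsMutualVisSet (G : SimpleGraph V) (X : Set V) : Prop :=
  ∀ x ∈ X, ∀ y ∈ X, Visible G X x y

/-- outer mutual-visibility set -/
def IsOuterMutualVisSet (G : SimpleGraph V) (X : Set V) : Prop :=
  IsMutualVisSet G X ∧ ∀ x ∈ X, ∀ y ∉ X, Visible G X x y

/-- dual mutual-visibility set -/
def IsDualMutualVisSet (G : SimpleGraph V) (X : Set V) : Prop :=
  IsMutualVisSet G X ∧ ∀ x ∉ X, ∀ y ∉ X, Visible G X x y

/-- total mutual-visibility set -/
def IsTotalMutualVisSet (G : SimpleGraph V) (X : Set V) : Prop :=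
  ∀ x y : V, Visible G X x y

/-- mutual-visibility number μ(G) -/
noncomputable def mu (G : SimpleGraph V) : ℕ :=
  sSup {k | ∃ X : Set V, IsMutualVisSet G X ∧ X.ncard = k}

/-- outer mutual-visibility number μ_o(G) -/
noncomputable def muOuter (G : SimpleGraph V) : ℕ :=
  sSup {k | ∃ X : Set V, IsOuterMutualVisSet G X ∧ X.ncard = k}

/-- dual mutual-visibility number μ_d(G) -/
noncomputable def muDual (G : SimpleGraph V) : ℕ :=
  sSup {k | ∃ X : Set V, IsDualMutualVisSet G X ∧ X.ncard = k}

/-- total mutual-visibility number μ_t(G) -/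
noncomputable def muTotal (G : SimpleGraph V) : ℕ :=
  sSup {k | ∃ X : Set V, IsTotalMutualVisSet G X ∧ X.ncard = k}

/-- `H` contains a subgraph copy of `F`. -/
def ContainsCopy (F : SimpleGraph W) (H : SimpleGraph V) : Prop :=
  ∃ f : W → V, Function.Injective f ∧ ∀ a b, F.Adj a b → H.Adj (f a) (f b)

/-- The Turán number ex(n; F): max number of edges of an `n`-vertex graph with no copy of `F`. -/
noncomputable def exNum (n : ℕ) (F : SimpleGraph W) : ℕ :=
  sSup {k | ∃ H : SimpleGraph (Fin n), ¬ ContainsCopy F H ∧ H.edgeSet.ncard = k}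

/-- The direct (tensor/categorical) product of graphs. -/
def directProd (G : SimpleGraph V) (H : SimpleGraph W) : SimpleGraph (V × W) where
  Adj x y := G.Adj x.1 y.1 ∧ H.Adj x.2 y.2
  symm := ⟨fun _ _ h => ⟨h.1.symm, h.2.symm⟩⟩
  loopless := ⟨fun x h => G.irrefl h.1⟩

/-- The join `G + H` of two graphs. -/
def graphJoin (G : SimpleGraph V) (H : SimpleGraph W) : SimpleGraph (V ⊕ W) where
  Adj u v := match u, v with
    | Sum.inl a, Sum.inl b => G.Adj a b
    | Sum.inr a, Sum.inr b => H.Adj a b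
    | _, _ => True
  symm := ⟨fun u v => match u, v with
    | Sum.inl _, Sum.inl _ => fun h => G.adj_symm h
    | Sum.inr _, Sum.inr _ => fun h => H.adj_symm h
    | Sum.inl _, Sum.inr _ => fun _ => trivial
    | Sum.inr _, Sum.inl _ => fun _ => trivial⟩
  loopless := ⟨fun u => match u with
    | Sum.inl _ => G.irrefl
    | Sum.inr _ => H.irrefl⟩

/-- A big-μ graph: `G = (K_1 ∪ K_t) + H` for some `t ≥ 0` and some graph `H`. -/
def IsBigMu {V : Type} (G : SimpleGraph V) : Prop :=
  ∃ (t : ℕ) (W : Type) (H : SimpleGraph W),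
    Nonempty (G ≃g graphJoin ((⊤ : SimpleGraph (Fin 1)) ⊕g (⊤ : SimpleGraph (Fin t))) H)

/-- A cograph: a graph with no induced path on four vertices. -/
def IsCograph (G : SimpleGraph V) : Prop :=
  ¬ ∃ f : Fin 4 → V, Function.Injective f ∧
      ∀ a b, (pathGraph 4).Adj a b ↔ G.Adj (f a) (f b)

/-- The Petersen graph, realized as the Kneser graph K(5,2). -/
def petersen : SimpleGraph {s : Finset (Fin 5) // s.card = 2} where
  Adj a b := Disjoint a.1 b.1
  symm := ⟨fun _ _ h => h.symm⟩
  loopless := ⟨by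
    rintro ⟨s, hs⟩ h
    rw [disjoint_self, Finset.bot_eq_empty] at h
    subst h
    simp at hs⟩


section Helpers

lemma vis_self (G : SimpleGraph V) (X : Set V) (x : V) : Visible G X x x := by
  refine ⟨Walk.nil, by simp [SimpleGraph.dist_self], ?_⟩
  intro v hv h1 _
  simp at hv
  exact absurd hv h1

lemma vis_adj (G : SimpleGraph V) (X : Set V) {x y : V} (h : G.Adj x y) :
    Visible G X x y := by
  refine ⟨h.toWalk, ?_, ?_⟩
  · simp [SimpleGraph.dist_eq_one_iff_adj.mpr h]
  · intro v hv h1 h2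
    simp [Walk.support] at hv
    rcases hv with rfl | rfl
    · exact absurd rfl h1
    · exact absurd rfl h2

lemma vis_two (G : SimpleGraph V) (X : Set V) {x y z : V}
    (hxz : G.Adj x z) (hzy : G.Adj z y) (hxy : ¬ G.Adj x y) (hne : x ≠ y) (hz : z ∉ X) :
    Visible G X x y := by
  refine ⟨Walk.cons hxz (Walk.cons hzy Walk.nil), ?_, ?_⟩
  · have h2 : G.dist x y ≤ 2 := by
      simpa using SimpleGraph.dist_le (Walk.cons hxz (Walk.cons hzy Walk.nil))
    have h0 : G.dist x y ≠ 0 := by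
      rw [Ne, SimpleGraph.dist_eq_zero_iff_eq_or_not_reachable]
      push_neg
      exact ⟨hne, ⟨Walk.cons hxz (Walk.cons hzy Walk.nil)⟩⟩
    have h1 : G.dist x y ≠ 1 := fun h => hxy (SimpleGraph.dist_eq_one_iff_adj.mp h)
    simp only [Walk.length_cons, Walk.length_nil]
    omega
  · intro v hv h1 h2
    simp [Walk.support] at hv
    rcases hv with rfl | rfl | rfl
    · exact absurd rfl h1
    · exact hz
    · exact absurd rfl h2

end Helpers

theorem cross_is_dual_mv_set (n m : ℕ) (hn : 3 ≤ n) (hm : 3 ≤ m) :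
    IsDualMutualVisSet ((⊤ : SimpleGraph (Fin n)) □ (⊤ : SimpleGraph (Fin m)))
      {p : Fin n × Fin m | p.2 = ⟨0, by omega⟩ ∨ p.1 = ⟨0, by omega⟩} ∧
    ({p : Fin n × Fin m | p.2 = ⟨0, by omega⟩ ∨ p.1 = ⟨0, by omega⟩} : Set (Fin n × Fin m)).ncard
      = n + m - 1 :=
  by
  have hn0 : 0 < n := by omega
  have hm0 : 0 < m := by omega
  set G := ((⊤ : SimpleGraph (Fin n)) □ (⊤ : SimpleGraph (Fin m))) with hG
  set X : Set (Fin n × Fin m) :=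
    {p : Fin n × Fin m | p.2 = ⟨0, by omega⟩ ∨ p.1 = ⟨0, by omega⟩} with hX
  have hmemX : ∀ p : Fin n × Fin m, p ∈ X ↔ (p.2 = ⟨0, hm0⟩ ∨ p.1 = ⟨0, hn0⟩) := by
    intro p; rfl
  have hadj : ∀ x y : Fin n × Fin m,
      G.Adj x y ↔ (x.1 ≠ y.1 ∧ x.2 = y.2) ∨ (x.2 ≠ y.2 ∧ x.1 = y.1) := by
    intro x y
    simp [hG, SimpleGraph.boxProd_adj]
  have vis : ∀ x y : Fin n × Fin m,
      ((x ∈ X ∧ y ∈ X) ∨ (x ∉ X ∧ y ∉ X)) → Visible G X x y := by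
    intro x y hmem
    rcases eq_or_ne x y with rfl | hne
    · exact vis_self G X x
    by_cases hA : G.Adj x y
    · exact vis_adj G X hA
    have hfst : x.1 ≠ y.1 := by
      intro h
      by_cases h2 : x.2 = y.2
      · exact hne (Prod.ext h h2)
      · exact hA ((hadj x y).mpr (Or.inr ⟨h2, h⟩))
    have hsnd : x.2 ≠ y.2 := by
      intro h
      by_cases h1 : x.1 = y.1
      · exact hne (Prod.ext h1 h)
      · exact hA ((hadj x y).mpr (Or.inl ⟨h1, h⟩))
    rcases hmem with ⟨hx, hy⟩ | ⟨hx, hy⟩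
    · rcases (hmemX x).mp hx with hx2 | hx1
      · rcases (hmemX y).mp hy with hy2 | hy1
        · exact absurd (hx2.trans hy2.symm) hsnd
        · -- x.2 = 0, y.1 = 0, midpoint (x.1, y.2)
          refine vis_two G X (z := (x.1, y.2)) ?_ ?_ hA hne ?_
          · exact (hadj _ _).mpr (Or.inr ⟨hsnd, rfl⟩)
          · exact (hadj _ _).mpr (Or.inl ⟨hfst, rfl⟩)
          · rw [hmemX]
            push_neg
            exact ⟨fun h => hsnd (hx2.trans h.symm), fun h => hfst (h.trans hy1.symm)⟩
      · rcases (hmemX y).mp hy with hy2 | hy1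
        · -- x.1 = 0, y.2 = 0, midpoint (y.1, x.2)
          refine vis_two G X (z := (y.1, x.2)) ?_ ?_ hA hne ?_
          · exact (hadj _ _).mpr (Or.inl ⟨hfst, rfl⟩)
          · exact (hadj _ _).mpr (Or.inr ⟨hsnd, rfl⟩)
          · rw [hmemX]
            push_neg
            exact ⟨fun h => hsnd (h.trans hy2.symm), fun h => hfst (hx1.trans h.symm)⟩
        · exact absurd (hx1.trans hy1.symm) hfst
    · -- both outside X, midpoint (x.1, y.2)
      rw [hmemX] at hx hy
      push_neg at hx hy
      refine vis_two G X (z := (x.1, y.2)) ?_ ?_ hA hne ?_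
      · exact (hadj _ _).mpr (Or.inr ⟨hsnd, rfl⟩)
      · exact (hadj _ _).mpr (Or.inl ⟨hfst, rfl⟩)
      · rw [hmemX]
        push_neg
        exact ⟨hy.1, hx.2⟩
  refine ⟨⟨fun x hx y hy => vis x y (Or.inl ⟨hx, hy⟩),
          fun x hx y hy => vis x y (Or.inr ⟨hx, hy⟩)⟩, ?_⟩
  -- cardinality
  have hXF : X = ↑((Finset.univ ×ˢ {(⟨0, hm0⟩ : Fin m)}) ∪
      (({(⟨0, hn0⟩ : Fin n)} : Finset (Fin n)) ×ˢ Finset.univ)) := by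
    ext ⟨p1, p2⟩
    simp [hmemX (p1, p2), Finset.mem_union, Finset.mem_product, Prod.ext_iff]
    tauto
  rw [hXF, Set.ncard_coe_finset]
  have hinter : (Finset.univ ×ˢ {(⟨0, hm0⟩ : Fin m)}) ∩
      (({(⟨0, hn0⟩ : Fin n)} : Finset (Fin n)) ×ˢ Finset.univ) =
      {((⟨0, hn0⟩ : Fin n), (⟨0, hm0⟩ : Fin m))} := by
    ext ⟨p1, p2⟩
    simp [Finset.mem_inter, Finset.mem_product, Prod.ext_iff]
    tauto
  have := Finset.card_union_add_card_inter
    (Finset.univ ×ˢ {(⟨0, hm0⟩ : Fin m)})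
    (({(⟨0, hn0⟩ : Fin n)} : Finset (Fin n)) ×ˢ Finset.univ)
  rw [hinter] at this
  simp only [Finset.card_product, Finset.card_singleton, Finset.card_univ, Fintype.card_fin, mul_one, one_mul] at this
  omega
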